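/- arXiv:2410.24170 — 2 statements merged into one kernel-verified Lean document; each statement's English description precedes it below -/
import Mathlib

section
/- Assume the waiting times X_j, j ∈ ℕ, are mutually independent and X_j < ∞ almost surely for each j, and that for some α > 0 one has ∑_{j=1}^∞ E[e^{−α ∑_{i=1}^{j} X_i}] < 1. Then, almost surely, |𝒯_t| < ∞ for every t > 0; that is, the Crump–Mode–Jagers process is non-explosive. -/
open MeasureTheory ProbabilityTheory Filter
open scoped ENNReal

namespace CMJ

/-- Ulam–Harris labels, encoded as *reversed* addresses: `i :: u` is the `(i+1)`-th child
of `u`, so the Lean child index `i : ℕ` corresponds to the paper's child index `i + 1`,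
and the Lean waiting time `X u j` corresponds to the paper's `X(u (j+1))`. -/
abbrev Node : Type := List ℕ

variable {Ω : Type*} [MeasurableSpace Ω]

/-- Birth times: `birth X [] = 0` and
`birth X (i :: u) = birth X u + ∑_{j=0}^{i} X u j`. -/
noncomputable def birth (X : Node → ℕ → Ω → ℝ≥0∞) : Node → Ω → ℝ≥0∞
  | [] => fun _ => 0
  | i :: u => fun ω => birth X u ω + ∑ j ∈ Finset.range (i + 1), X u j ω

/-- The population born before time `t`: `𝒯_t = {u : B(u) ≤ t}`. -/
def tree (X : Node → ℕ → Ω → ℝ≥0∞) (t : ℝ≥0∞) (ω : Ω) : Set Node :=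
  {u | birth X u ω ≤ t}

/-- `τ_k = inf {t ≥ 0 : |𝒯_t| ≥ k}`. -/
noncomputable def tau (X : Node → ℕ → Ω → ℝ≥0∞) (k : ℕ) (ω : Ω) : ℝ≥0∞ :=
  sInf {t : ℝ≥0∞ | (k : ℕ∞) ≤ (tree X t ω).encard}

/-- The `n`-th jump tree `𝒯_{τ_n}`. -/
noncomputable def jumpTree (X : Node → ℕ → Ω → ℝ≥0∞) (n : ℕ) (ω : Ω) : Set Node :=
  tree X (tau X n ω) ω

/-- Out-degree (number of children) of `u` in the tree `T`. -/
noncomputable def deg (T : Set Node) (u : Node) : ℕ∞ :=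
  {i : ℕ | i :: u ∈ T}.encard

open scoped Classical in
/-- Out-degree with the convention `outdeg(u,T) = -∞` (i.e. `⊥`) if `u ∉ T`. -/
noncomputable def degB (T : Set Node) (u : Node) : WithBot ℕ∞ :=
  if u ∈ T then (deg T u : WithBot ℕ∞) else ⊥

/-- `u` attains the maximal out-degree in `T` (this expresses
`outdeg(u,T) = max_{v ∈ T} outdeg(v,T)` with the convention `outdeg(u,T) = -∞`
for `u ∉ T`). -/
def IsMaxDeg (T : Set Node) (u : Node) : Prop :=
  u ∈ T ∧ ∀ v ∈ T, deg T v ≤ deg T u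

/-- `u` is a persistent hub of the tree sequence `T` if it attains the maximal
out-degree for all but finitely many `n`. -/
def IsPersistentHub (T : ℕ → Set Node) (u : Node) : Prop :=
  ∀ᶠ n in atTop, IsMaxDeg (T n) u

/-- exponential weight -/
noncomputable def phi (α : ℝ) (x : ℝ≥0∞) : ℝ≥0∞ :=
  if x = ⊤ then 0 else ENNReal.ofReal (Real.exp (-α * x.toReal))

lemma measurable_phi (α : ℝ) : Measurable (phi α) := by
  unfold phi
  refine Measurable.ite ?_ measurable_const ?_
  · exact measurableSet_eq
  · exact ENNReal.measurable_ofReal.comp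
      (Real.measurable_exp.comp (ENNReal.measurable_toReal.const_mul _))

lemma phi_zero (α : ℝ) : phi α 0 = 1 := by
  simp [phi]

lemma phi_add (α : ℝ) (x y : ℝ≥0∞) : phi α (x + y) = phi α x * phi α y := by
  unfold phi
  rcases eq_or_ne x ⊤ with hx | hx
  · simp [hx]
  rcases eq_or_ne y ⊤ with hy | hy
  · simp [hy]
  rw [if_neg (by simp [ENNReal.add_eq_top, hx, hy]), if_neg hx, if_neg hy,
    ← ENNReal.ofReal_mul (Real.exp_nonneg _), ← Real.exp_add, ENNReal.toReal_add hx hy]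
  ring_nf

lemma phi_anti {α : ℝ} (hα : 0 ≤ α) {x t : ℝ≥0∞} (hx : x ≤ t) (ht : t ≠ ⊤) :
    phi α t ≤ phi α x := by
  have hx' : x ≠ ⊤ := ne_top_of_le_ne_top ht hx
  rw [phi, phi, if_neg ht, if_neg hx']
  refine ENNReal.ofReal_le_ofReal (Real.exp_le_exp.mpr ?_)
  have := ENNReal.toReal_mono ht hx
  nlinarith

lemma phi_le_ofReal (α : ℝ) (x : ℝ≥0∞) :
    phi α x ≤ ENNReal.ofReal (Real.exp (-α * x.toReal)) := by
  unfold phi; split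
  · exact zero_le
  · exact le_rfl

/-- abstract birth functional on configurations -/
noncomputable def birthFn : Node → (Node → ℕ → ℝ≥0∞) → ℝ≥0∞
  | [] => fun _ => 0
  | i :: u => fun Y => birthFn u Y + ∑ j ∈ Finset.range (i + 1), Y u j

lemma birth_eq_birthFn (X : Node → ℕ → Ω → ℝ≥0∞) (u : Node) (ω : Ω) :
    birth X u ω = birthFn u (fun w j => X w j ω) := by
  induction u with
  | nil => rfl
  | cons i u ih => simp [birth, birthFn, ih]

lemma measurable_birthFn (u : Node) : Measurable (birthFn u) := by
  induction u with
  | nil => simpa [birthFn] using measurable_const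
  | cons i u ih =>
      exact ih.add (Finset.measurable_sum _ fun j _ =>
        (measurable_pi_apply j).comp (measurable_pi_apply u))

lemma measurable_birth (X : Node → ℕ → Ω → ℝ≥0∞) (hmeas : ∀ u j, Measurable (X u j))
    (u : Node) : Measurable (birth X u) := by
  induction u with
  | nil => simpa [birth] using measurable_const
  | cons i u ih => exact ih.add (Finset.measurable_sum _ fun j _ => hmeas u j)

/-- the list of proper suffixes (tree-ancestors) of a node -/
def depsList : Node → List Node
  | [] => []
  | _ :: u => u :: depsList u

lemma length_lt_of_mem_depsList {u w : Node} (h : w ∈ depsList u) : w.length < u.length := by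
  induction u with
  | nil => simp [depsList] at h
  | cons i u ih =>
      rcases (List.mem_cons).mp h with rfl | h
      · simp
      · exact (ih h).trans (by simp)

lemma birthFn_congr {u : Node} {Y Z : Node → ℕ → ℝ≥0∞}
    (h : ∀ w ∈ depsList u, Y w = Z w) : birthFn u Y = birthFn u Z := by
  induction u with
  | nil => rfl
  | cons i u ih =>
      have h1 : Y u = Z u := h u (by simp [depsList])
      have h2 : birthFn u Y = birthFn u Z := ih fun w hw => h w (by simp [depsList, hw])
      simp [birthFn, h1, h2]

/-- finset of ancestors -/
def deps (u : Node) : Finset Node := (depsList u).toFinset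

lemma not_mem_deps (u : Node) : u ∉ deps u := by
  intro h
  exact lt_irrefl _ (length_lt_of_mem_depsList (List.mem_toFinset.mp h))

/-- key independence: `birth X u` is independent of the waiting-time sequence at `u`. -/
lemma indep_birth_seq (P : Measure Ω) [IsProbabilityMeasure P]
    (X : Node → ℕ → Ω → ℝ≥0∞) (hmeas : ∀ u j, Measurable (X u j))
    (hnodes_indep : iIndepFun
      (fun u ω (j : ℕ) => X u j ω) P) (u : Node) :
    IndepFun (birth X u) (fun ω (j : ℕ) => X u j ω) P := by
  classical
  have hdisj : Disjoint (deps u) ({u} : Finset Node) :=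
    Finset.disjoint_singleton_right.mpr (not_mem_deps u)
  have hmeas' : ∀ w : Node, Measurable (fun ω (j : ℕ) => X w j ω) :=
    fun w => measurable_pi_lambda _ fun j => hmeas w j
  have hI := hnodes_indep.indepFun_finset (deps u) ({u} : Finset Node) hdisj hmeas'
  -- compose with measurable maps
  set E : ((w : deps u) → ℕ → ℝ≥0∞) → (Node → ℕ → ℝ≥0∞) :=
    fun f w j => if h : w ∈ deps u then f ⟨w, h⟩ j else 0 with hE
  have hEmeas : Measurable E := by
    refine measurable_pi_lambda _ fun w => measurable_pi_lambda _ fun j => ?_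
    by_cases h : w ∈ deps u
    · simp only [hE, dif_pos h]
      exact (measurable_pi_apply j).comp (measurable_pi_apply (⟨w, h⟩ : deps u))
    · simp only [hE, dif_neg h]; exact measurable_const
  set G : ((w : deps u) → ℕ → ℝ≥0∞) → ℝ≥0∞ := fun f => birthFn u (E f) with hG
  have hGmeas : Measurable G := (measurable_birthFn u).comp hEmeas
  set H : ((w : ({u} : Finset Node)) → ℕ → ℝ≥0∞) → (ℕ → ℝ≥0∞) :=
    fun f => f ⟨u, Finset.mem_singleton_self u⟩ with hH
  have hHmeas : Measurable H := measurable_pi_apply _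
  have hcomp := hI.comp hGmeas hHmeas
  have hleft : (G ∘ fun ω (w : deps u) (j : ℕ) => X w.1 j ω) = birth X u := by
    funext ω
    show birthFn u (E fun w j => X w.1 j ω) = birth X u ω
    rw [birth_eq_birthFn]
    refine birthFn_congr fun w hw => ?_
    funext j
    have hwm : w ∈ deps u := List.mem_toFinset.mpr hw
    simp [hE, hwm]
  have hright : (H ∘ fun ω (w : ({u} : Finset Node)) (j : ℕ) => X w.1 j ω)
      = fun ω (j : ℕ) => X u j ω := rfl
  rw [hleft, hright] at hcomp
  exact hcomp

lemma lintegral_phi_birth_cons (P : Measure Ω) [IsProbabilityMeasure P]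
    (X : Node → ℕ → Ω → ℝ≥0∞) (hmeas : ∀ u j, Measurable (X u j))
    (hnodes_indep : iIndepFun
      (fun u ω (j : ℕ) => X u j ω) P)
    (hnodes_ident : ∀ u : Node,
      Measure.map (fun ω (j : ℕ) => X u j ω) P = Measure.map (fun ω (j : ℕ) => X [] j ω) P)
    (α : ℝ) (u : Node) (i : ℕ) :
    ∫⁻ ω, phi α (birth X (i :: u) ω) ∂P
      = (∫⁻ ω, phi α (birth X u ω) ∂P)
        * ∫⁻ ω, phi α (∑ j ∈ Finset.range (i + 1), X [] j ω) ∂P := by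
  have hseq : ∀ w : Node, Measurable (fun ω (j : ℕ) => X w j ω) :=
    fun w => measurable_pi_lambda _ fun j => hmeas w j
  set g : (ℕ → ℝ≥0∞) → ℝ≥0∞ := fun v => phi α (∑ j ∈ Finset.range (i + 1), v j) with hg
  have hgmeas : Measurable g :=
    (measurable_phi α).comp (Finset.measurable_sum _ fun j _ => measurable_pi_apply j)
  have hindep : IndepFun (fun ω => phi α (birth X u ω))
      (fun ω => g (fun j => X u j ω)) P :=
    (indep_birth_seq P X hmeas hnodes_indep u).comp (measurable_phi α) hgmeas
  have h1 : ∫⁻ ω, phi α (birth X (i :: u) ω) ∂P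
      = ∫⁻ ω, phi α (birth X u ω) * g (fun j => X u j ω) ∂P := by
    refine lintegral_congr fun ω => ?_
    show phi α (birth X u ω + _) = _
    rw [phi_add]
  have h2 : ∫⁻ ω, phi α (birth X u ω) * g (fun j => X u j ω) ∂P
      = (∫⁻ ω, phi α (birth X u ω) ∂P) * ∫⁻ ω, g (fun j => X u j ω) ∂P :=
    lintegral_mul_eq_lintegral_mul_lintegral_of_indepFun''
      ((measurable_phi α).comp (measurable_birth X hmeas u)).aemeasurable
      (hgmeas.comp (hseq u)).aemeasurable hindep
  rw [h1, h2]
  congr 1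
  calc ∫⁻ ω, g (fun j => X u j ω) ∂P
      = ∫⁻ v, g v ∂(Measure.map (fun ω (j : ℕ) => X u j ω) P) :=
        (lintegral_map hgmeas (hseq u)).symm
    _ = ∫⁻ v, g v ∂(Measure.map (fun ω (j : ℕ) => X [] j ω) P) := by rw [hnodes_ident u]
    _ = ∫⁻ ω, g (fun j => X [] j ω) ∂P := lintegral_map hgmeas (hseq [])

def consEquiv (n : ℕ) : ℕ × {u : Node // u.length = n} ≃ {u : Node // u.length = n + 1} where
  toFun p := ⟨p.1 :: p.2.1, by simp [p.2.2]⟩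
  invFun u := (u.1.headI, ⟨u.1.tail, by
    rcases u with ⟨u, h⟩
    cases u with
    | nil => simp at h
    | cons i v => simpa using h⟩)
  left_inv p := by rcases p with ⟨i, v, hv⟩; simp
  right_inv u := by
    rcases u with ⟨u, h⟩
    cases u with
    | nil => simp at h
    | cons i v => simp
def sigmaEquiv : (Σ n : ℕ, {u : Node // u.length = n}) ≃ Node where
  toFun p := p.2.1
  invFun u := ⟨u.length, u, rfl⟩
  left_inv p := by rcases p with ⟨n, u, rfl⟩; rfl
  right_inv u := rfl


theorem nonexplosive
    (P : Measure Ω) [IsProbabilityMeasure P]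
    (X : Node → ℕ → Ω → ℝ≥0∞)
    (hmeas : ∀ u j, Measurable (X u j))
    -- the sequences `(X(u ·))_u` are i.i.d. across nodes
    (hnodes_indep : iIndepFun
      (fun u ω (j : ℕ) => X u j ω) P)
    (hnodes_ident : ∀ u : Node,
      Measure.map (fun ω (j : ℕ) => X u j ω) P = Measure.map (fun ω (j : ℕ) => X [] j ω) P)
    -- the waiting times `X_j` are mutually independent
    (hA1 : iIndepFun (fun j => X [] j) P)
    -- `X_j < ∞` almost surely
    (hA2 : ∀ j : ℕ, ∀ᵐ ω ∂P, X [] j ω < ⊤)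
    (α : ℝ) (hα : 0 < α)
    -- `∑_{j=1}^∞ E[e^{-α ∑_{i=1}^j X_i}] < 1`
    (hlap : ∑' j : ℕ, ∫⁻ ω, ENNReal.ofReal
        (Real.exp (-α * (∑ i ∈ Finset.range (j + 1), X [] i ω).toReal)) ∂P < 1) :
    ∀ᵐ ω ∂P, ∀ t : ℝ≥0∞, 0 < t → t < ⊤ → (tree X t ω).Finite := by
  classical
  set c : ℝ≥0∞ :=
    ∑' i : ℕ, ∫⁻ ω, phi α (∑ j ∈ Finset.range (i + 1), X [] j ω) ∂P with hc
  have hc1 : c < 1 :=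
    lt_of_le_of_lt (ENNReal.tsum_le_tsum fun i =>
      lintegral_mono fun ω => phi_le_ofReal α _) hlap
  set L : ℕ → ℝ≥0∞ :=
    fun n => ∑' u : {u : Node // u.length = n}, ∫⁻ ω, phi α (birth X u.1 ω) ∂P with hL
  have hL0 : L 0 = 1 := by
    have h1 : L 0 = ∫⁻ ω, phi α (birth X ([] : Node) ω) ∂P := by
      rw [hL]
      exact tsum_eq_single (⟨[], rfl⟩ : {u : Node // u.length = 0}) fun b hb =>
        (hb (Subtype.ext (List.length_eq_zero_iff.mp b.2))).elim
    rw [h1]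
    show ∫⁻ _, phi α 0 ∂P = 1
    simp [phi_zero, lintegral_const]
  have hLsucc : ∀ n, L (n + 1) = L n * c := by
    intro n
    have e := (consEquiv n).tsum_eq
      (fun u : {u : Node // u.length = n + 1} => ∫⁻ ω, phi α (birth X u.1 ω) ∂P)
    calc L (n + 1)
        = ∑' p : ℕ × {u : Node // u.length = n},
            ∫⁻ ω, phi α (birth X (p.1 :: p.2.1) ω) ∂P := e.symm
      _ = ∑' p : ℕ × {u : Node // u.length = n},
            (∫⁻ ω, phi α (birth X p.2.1 ω) ∂P)
              * ∫⁻ ω, phi α (∑ j ∈ Finset.range (p.1 + 1), X [] j ω) ∂P :=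
          tsum_congr fun p =>
            lintegral_phi_birth_cons P X hmeas hnodes_indep hnodes_ident α p.2.1 p.1
      _ = ∑' i : ℕ, ∑' u : {u : Node // u.length = n},
            (∫⁻ ω, phi α (birth X u.1 ω) ∂P)
              * ∫⁻ ω, phi α (∑ j ∈ Finset.range (i + 1), X [] j ω) ∂P :=
          ENNReal.tsum_prod (f := fun i (u : {u : Node // u.length = n}) =>
            (∫⁻ ω, phi α (birth X u.1 ω) ∂P)
              * ∫⁻ ω, phi α (∑ j ∈ Finset.range (i + 1), X [] j ω) ∂P)
      _ = ∑' i : ℕ, L n * ∫⁻ ω, phi α (∑ j ∈ Finset.range (i + 1), X [] j ω) ∂P :=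
          tsum_congr fun i => ENNReal.tsum_mul_right
      _ = L n * c := ENNReal.tsum_mul_left
  have hLn : ∀ n, L n = c ^ n := by
    intro n
    induction n with
    | zero => simpa using hL0
    | succ n ih => rw [hLsucc n, ih, pow_succ]
  have htot : ∑' u : Node, ∫⁻ ω, phi α (birth X u ω) ∂P < ⊤ := by
    have e := sigmaEquiv.tsum_eq (fun u : Node => ∫⁻ ω, phi α (birth X u ω) ∂P)
    calc ∑' u : Node, ∫⁻ ω, phi α (birth X u ω) ∂P
        = ∑' p : Σ n : ℕ, {u : Node // u.length = n},
            ∫⁻ ω, phi α (birth X p.2.1 ω) ∂P := e.symm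
      _ = ∑' n : ℕ, ∑' u : {u : Node // u.length = n}, ∫⁻ ω, phi α (birth X u.1 ω) ∂P :=
          ENNReal.tsum_sigma (f := fun n (u : {u : Node // u.length = n}) =>
            ∫⁻ ω, phi α (birth X u.1 ω) ∂P)
      _ = ∑' n : ℕ, L n := rfl
      _ = ∑' n : ℕ, c ^ n := tsum_congr hLn
      _ = (1 - c)⁻¹ := ENNReal.tsum_geometric c
      _ < ⊤ := ENNReal.inv_lt_top.mpr (tsub_pos_of_lt hc1)
  have hWmeas : Measurable fun ω => ∑' u : Node, phi α (birth X u ω) :=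
    Measurable.ennreal_tsum fun u => (measurable_phi α).comp (measurable_birth X hmeas u)
  have hW : ∫⁻ ω, ∑' u : Node, phi α (birth X u ω) ∂P < ⊤ := by
    have hswap : ∫⁻ ω, ∑' u : Node, phi α (birth X u ω) ∂P
        = ∑' u : Node, ∫⁻ ω, phi α (birth X u ω) ∂P :=
      lintegral_tsum fun u =>
        ((measurable_phi α).comp (measurable_birth X hmeas u)).aemeasurable
    rw [hswap]; exact htot
  filter_upwards [ae_lt_top hWmeas hW.ne] with ω hω t ht htop
  have hε : (ENNReal.ofReal (Real.exp (-α * t.toReal))) ≠ 0 :=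
    (ENNReal.ofReal_pos.mpr (Real.exp_pos _)).ne'
  refine Set.Finite.subset
    (ENNReal.finite_const_le_of_tsum_ne_top hω.ne hε) fun u hu => ?_
  have h1 : phi α t ≤ phi α (birth X u ω) := phi_anti hα.le hu htop.ne
  rwa [phi, if_neg htop.ne] at h1
end CMJ
end

section
/- Let f : ℕ₀ → (0,∞) and suppose there is a constant C₀ > 0 such that f(i) ≤ C₀ (i+1) for all i ∈ ℕ₀. Then for every λ > 2C₀ one has ∑_{i=0}^∞ ∏_{j=0}^{i} f(j)/(f(j)+λ) < ∞. -/
/-!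
STATEMENT 19 (Example 2.9 of the paper): if `f(i) ≤ C₀ (i+1)` for all `i`, then for
every `λ > 2 C₀` the series `∑_i ∏_{j=0}^{i} f(j)/(f(j)+λ)` converges.
-/

lemma telescoping_prod : ∀ n : ℕ,
    ∏ j ∈ Finset.range n, ((j : ℝ) + 1) / ((j : ℝ) + 3)
      = 2 / (((n : ℝ) + 1) * ((n : ℝ) + 2)) := by
  intro n
  induction n with
  | zero => norm_num
  | succ n ih =>
      rw [Finset.prod_range_succ, ih]
      have h1 : ((n : ℝ) + 1) ≠ 0 := by positivity
      have h2 : ((n : ℝ) + 2) ≠ 0 := by positivity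
      have h3 : ((n : ℝ) + 3) ≠ 0 := by positivity
      push_cast
      field_simp
      ring

theorem series_of_products_summable
    (f : ℕ → ℝ) (hf : ∀ i, 0 < f i)
    (C₀ : ℝ) (hC₀ : 0 < C₀)
    (hbound : ∀ i : ℕ, f i ≤ C₀ * ((i : ℝ) + 1)) :
    ∀ lam : ℝ, 2 * C₀ < lam →
      Summable fun i : ℕ => ∏ j ∈ Finset.range (i + 1), f j / (f j + lam) := by
  intro lam hlam
  have hlampos : 0 < lam := lt_trans (by positivity) hlam
  -- factor bound
  have hfac : ∀ j : ℕ, f j / (f j + lam) ≤ ((j : ℝ) + 1) / ((j : ℝ) + 3) := by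
    intro j
    have hfj := hf j
    have hden : 0 < f j + lam := by linarith
    rw [div_le_div_iff₀ hden (by positivity)]
    have h1 : 2 * f j ≤ 2 * (C₀ * ((j : ℝ) + 1)) := by
      have := hbound j; linarith
    have h2 : 2 * C₀ * ((j : ℝ) + 1) ≤ lam * ((j : ℝ) + 1) := by
      have : (0:ℝ) ≤ (j : ℝ) + 1 := by positivity
      nlinarith
    nlinarith
  -- term bound
  have hterm : ∀ i : ℕ,
      (∏ j ∈ Finset.range (i + 1), f j / (f j + lam))
        ≤ 2 / ((((i : ℝ) + 1) + 1) * (((i : ℝ) + 1) + 2)) := by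
    intro i
    have := telescoping_prod (i + 1)
    push_cast at this
    rw [← this]
    apply Finset.prod_le_prod
    · intro j _
      have := hf j
      positivity
    · intro j _; exact hfac j
  -- summable majorant
  have hmaj : Summable fun i : ℕ => 2 / ((((i : ℝ) + 1) + 1) * (((i : ℝ) + 1) + 2)) := by
    have hbase : Summable fun n : ℕ => 1 / (n : ℝ) ^ 2 :=
      (Real.summable_one_div_nat_pow (p := 2)).mpr one_lt_two
    have hshift : Summable fun n : ℕ => 1 / ((n : ℝ) + 1) ^ 2 := by
      have := (summable_nat_add_iff 1).mpr hbase
      simpa [Nat.cast_add] using this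
    refine Summable.of_nonneg_of_le (fun i => by positivity) (fun i => ?_)
      (hshift.mul_left 2)
    have h1 : ((i : ℝ) + 1) ^ 2 ≤ (((i : ℝ) + 1) + 1) * (((i : ℝ) + 1) + 2) := by nlinarith
    calc 2 / ((((i : ℝ) + 1) + 1) * (((i : ℝ) + 1) + 2))
        ≤ 2 / ((i : ℝ) + 1) ^ 2 := by
          apply div_le_div_of_nonneg_left (by norm_num) (by positivity) h1
      _ = 2 * (1 / ((i : ℝ) + 1) ^ 2) := by ring
  exact Summable.of_nonneg_of_le
    (fun i => Finset.prod_nonneg fun j _ => div_nonneg (hf j).le (by linarith [hf j]))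
    hterm hmaj
end
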